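/- arXiv:1103.0895 — 2 statements merged into one kernel-verified Lean document; each statement's English description precedes it below -/
import Mathlib

section
/- For a fixed finite alphabet A and dimension d, the collection of sofic subshifts of A^{ℤ^d} is countable. Consequently there exist finite sets S of multidimensional substitutions and sequences S ∈ S^ℕ whose S-adic subshift is not sofic. -/
/-! Common definitions: multidimensional configurations, subshifts, SFTs,
sofic and effective subshifts, multidimensional substitutions,
S-adic subshifts, non-deterministic substitution systems, property A,
and the marking construction of Aubrun–Sablik. -/

open scoped BigOperators

/-- A `d`-dimensional configuration over the alphabet `A`. -/
abbrev Config (A : Type*) (d : ℕ) := (Fin d → ℤ) → A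

/-- The shift action of `ℤ^d` on configurations. -/
def shift {A : Type*} {d : ℕ} (v : Fin d → ℤ) (x : Config A d) : Config A d :=
  fun u => x (u + v)

/-- A finite pattern, presented as a finite list of (position, letter) pairs. -/
abbrev Pattern (A : Type*) (d : ℕ) := List ((Fin d → ℤ) × A)

/-- The pattern `p` appears in the configuration `x` (at some translate). -/
def PatternAppears {A : Type*} {d : ℕ} (p : Pattern A d) (x : Config A d) : Prop :=
  ∃ v : Fin d → ℤ, ∀ q ∈ p, x (q.1 + v) = q.2

/-- The set of configurations avoiding every pattern of `F`. -/
def avoiding {A : Type*} {d : ℕ} (F : Set (Pattern A d)) : Set (Config A d) :=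
  {x | ∀ p ∈ F, ¬ PatternAppears p x}

/-- A subshift of finite type: defined by a finite family of forbidden patterns. -/
def IsSFT {A : Type*} {d : ℕ} (T : Set (Config A d)) : Prop :=
  ∃ F : Finset (Pattern A d), T = avoiding (↑F : Set (Pattern A d))

/-- The prodiscrete topology on configurations. -/
def configTop (A : Type*) (d : ℕ) : TopologicalSpace (Config A d) :=
  @Pi.topologicalSpace (Fin d → ℤ) (fun _ => A) (fun _ => ⊥)

/-- A factor map: a continuous shift-commuting map between fullshifts. -/
def IsFactorMap {A B : Type*} {d : ℕ} (π : Config A d → Config B d) : Prop :=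
  @Continuous _ _ (configTop A d) (configTop B d) π ∧
    ∀ (v : Fin d → ℤ) (x : Config A d), π (shift v x) = shift v (π x)

/-- A sofic subshift: the image of a subshift of finite type under a factor map. -/
def IsSofic {A : Type*} {d : ℕ} (T : Set (Config A d)) : Prop :=
  ∃ (n : ℕ) (T' : Set (Config (Fin n) d)) (π : Config (Fin n) d → Config A d),
    IsSFT T' ∧ IsFactorMap π ∧ T = π '' T'

/-- An effective subshift: defined by a recursively enumerable set of
forbidden patterns. -/
def IsEffective {A : Type*} [Primcodable A] {d : ℕ} (T : Set (Config A d)) : Prop :=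
  ∃ F : Set (Pattern A d), REPred (· ∈ F) ∧ T = avoiding F

/-- The projective subaction of a `d`-dimensional subshift along the subgroup
of `ℤ^d` generated by the family `u` of vectors. -/
def SA {A : Type*} {d d' : ℕ} (u : Fin d' → Fin d → ℤ) (T : Set (Config A d)) :
    Set (Config A d') :=
  {y | ∃ x ∈ T, ∀ i : Fin d' → ℤ, y i = x (∑ k, i k • u k)}

/-- A rectangular pattern: side lengths `size` and letters `data`
(only the values of `data` on the rectangle `[0,size)` are relevant). -/
structure RectPattern (A : Type*) (d : ℕ) where
  size : Fin d → ℕ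
  data : (Fin d → ℤ) → A

/-- Membership in the (rectangular) support of a rectangular pattern. -/
def RectPattern.mem {A : Type*} {d : ℕ} (p : RectPattern A d) (u : Fin d → ℤ) : Prop :=
  ∀ l, 0 ≤ u l ∧ u l < (p.size l : ℤ)

/-- An `(A,d)`-substitution: it maps every letter to a rectangular pattern. -/
abbrev Substitution (A : Type*) (d : ℕ) := A → RectPattern A d

/-- A substitution is non-degenerate when all images have side lengths `≥ 1`. -/
def Nondegenerate {A : Type*} {d : ℕ} (s : Substitution A d) : Prop :=
  ∀ a l, 1 ≤ (s a).size l

/-- Signed cumulative sums of a width function (`cum g 0 = 0`,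
`cum g (r+1) = cum g r + g r`). -/
def cum (g : ℤ → ℕ) (r : ℤ) : ℤ :=
  if 0 ≤ r then ∑ j ∈ Finset.range r.toNat, (g (j : ℤ) : ℤ)
  else -∑ j ∈ Finset.range (-r).toNat, (g (-(j : ℤ) - 1) : ℤ)

/-- The point of `ℤ^d` with `l`-th coordinate `r` and all other coordinates `0`. -/
def axisPt {d : ℕ} (l : Fin d) (r : ℤ) : Fin d → ℤ :=
  fun l' => if l' = l then r else 0

/-- The deformation `φ` of the grid `ℤ^d` determined by a (position-dependent)
substitution `σ` applied to the letters `f`. -/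
def nphi {A : Type*} {d : ℕ} (σ : (Fin d → ℤ) → Substitution A d)
    (f : (Fin d → ℤ) → A) (i : Fin d → ℤ) : Fin d → ℤ :=
  fun l => cum (fun r => ((σ (axisPt l r)) (f (axisPt l r))).size l) (i l)

/-- Compatibility of a pattern of substitutions with a configuration:
positions sharing an `l`-th coordinate get blocks of equal `l`-th side length. -/
def NCompatC {A : Type*} {d : ℕ} (σ : (Fin d → ℤ) → Substitution A d)
    (x : Config A d) : Prop :=
  ∀ i j : Fin d → ℤ, ∀ l, i l = j l →
    ((σ i) (x i)).size l = ((σ j) (x j)).size l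

/-- `NImageC σ x y`: the configuration `y` is the image of the configuration `x`
under the (position-dependent) pattern of substitutions `σ`. -/
def NImageC {A : Type*} {d : ℕ} (σ : (Fin d → ℤ) → Substitution A d)
    (x y : Config A d) : Prop :=
  NCompatC σ x ∧
    ∀ i j : Fin d → ℤ, (∀ l, 0 ≤ j l ∧ j l < (((σ i) (x i)).size l : ℤ)) →
      y (nphi σ x i + j) = ((σ i) (x i)).data j

/-- Compatibility of a pattern of substitutions with a rectangular pattern. -/
def NCompatP {A : Type*} {d : ℕ} (σ : (Fin d → ℤ) → Substitution A d)
    (p : RectPattern A d) : Prop :=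
  ∀ i j : Fin d → ℤ, p.mem i → p.mem j → ∀ l, i l = j l →
    ((σ i) (p.data i)).size l = ((σ j) (p.data j)).size l

/-- `NImageP σ p q`: the rectangular pattern `q` is the image of the rectangular
pattern `p` under the (position-dependent) pattern of substitutions `σ`. -/
def NImageP {A : Type*} {d : ℕ} (σ : (Fin d → ℤ) → Substitution A d)
    (p q : RectPattern A d) : Prop :=
  NCompatP σ p ∧
    (∀ l, (q.size l : ℤ) = nphi σ p.data (fun l' => (p.size l' : ℤ)) l) ∧
    ∀ i : Fin d → ℤ, p.mem i →
      ∀ j : Fin d → ℤ, (∀ l, 0 ≤ j l ∧ j l < (((σ i) (p.data i)).size l : ℤ)) →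
        q.data (nphi σ p.data i + j) = ((σ i) (p.data i)).data j

/-- The one-letter rectangular pattern. -/
def letterPat {A : Type*} {d : ℕ} (a : A) : RectPattern A d :=
  ⟨fun _ => 1, fun _ => a⟩

/-- `𝒮`-patterns: iterated images of letters under patterns of substitutions
taken from `𝒮`. -/
inductive IsSPattern {A : Type*} {d : ℕ} (𝒮 : Set (Substitution A d)) :
    RectPattern A d → Prop
  | letter (a : A) : IsSPattern 𝒮 (letterPat a)
  | step (p q : RectPattern A d) (σ : (Fin d → ℤ) → Substitution A d)
      (hσ : ∀ u, σ u ∈ 𝒮) (hp : IsSPattern 𝒮 p) (h : NImageP σ p q) :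
      IsSPattern 𝒮 q

/-- The restriction of `f` to the finite window `U` occurs (as a sub-pattern)
inside the rectangular pattern `q`. -/
def OccursIn {A : Type*} {d : ℕ} (U : Finset (Fin d → ℤ)) (f : (Fin d → ℤ) → A)
    (q : RectPattern A d) : Prop :=
  ∃ v : Fin d → ℤ, ∀ u ∈ U, q.mem (u + v) ∧ q.data (u + v) = f u

/-- The local subshift generated by the set of substitutions `𝒮`: every finite
sub-pattern of the configuration is a sub-pattern of an `𝒮`-pattern. -/
def LocalSetSubshift {A : Type*} {d : ℕ} (𝒮 : Set (Substitution A d)) :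
    Set (Config A d) :=
  {x | ∀ U : Finset (Fin d → ℤ), ∃ q, IsSPattern 𝒮 q ∧ OccursIn U x q}

/-- `NChainC 𝒮 n y x`: `x` is obtained from `y` by applying `n` infinite
patterns of substitutions taken from `𝒮`. -/
def NChainC {A : Type*} {d : ℕ} (𝒮 : Set (Substitution A d)) :
    ℕ → Config A d → Config A d → Prop
  | 0, y, x => y = x
  | n+1, y, x => ∃ (z : Config A d) (σ : (Fin d → ℤ) → Substitution A d),
      (∀ u, σ u ∈ 𝒮) ∧ NImageC σ y z ∧ NChainC 𝒮 n z x

/-- The global subshift generated by the set of substitutions `𝒮`: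
configurations with pre-images of every order. -/
def GlobalSetSubshift {A : Type*} {d : ℕ} (𝒮 : Set (Substitution A d)) :
    Set (Config A d) :=
  {x | ∀ n : ℕ, ∃ y, NChainC 𝒮 n y x}

/-- Image of a configuration under a single (deterministic) substitution. -/
def ImageC {A : Type*} {d : ℕ} (s : Substitution A d) (x y : Config A d) : Prop :=
  NImageC (fun _ => s) x y

/-- Image of a rectangular pattern under a single (deterministic) substitution. -/
def ImageP {A : Type*} {d : ℕ} (s : Substitution A d) (p q : RectPattern A d) : Prop :=
  NImageP (fun _ => s) p q

/-- `IterC S n y x` means `ŝ_{[0,n]}(y) = x`, i.e. `x = s_0(s_1(⋯(s_n(y))⋯))`. -/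
def IterC {A : Type*} {d : ℕ} (S : ℕ → Substitution A d) :
    ℕ → Config A d → Config A d → Prop
  | 0, y, x => ImageC (S 0) y x
  | n+1, y, x => ∃ z, ImageC (S (n+1)) y z ∧ IterC S n z x

/-- `IterP S n p q` means `ŝ_{[0,n]}(p) = q` for rectangular patterns. -/
def IterP {A : Type*} {d : ℕ} (S : ℕ → Substitution A d) :
    ℕ → RectPattern A d → RectPattern A d → Prop
  | 0, p, q => ImageP (S 0) p q
  | n+1, p, q => ∃ r, ImageP (S (n+1)) p r ∧ IterP S n r q

/-- The global S-adic subshift `T'_S` of the sequence of substitutions `S`: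
configurations admitting a pre-image under `ŝ_{[0,n]}` for every `n`. -/
def GlobalSAdic {A : Type*} {d : ℕ} (S : ℕ → Substitution A d) : Set (Config A d) :=
  {x | ∀ n : ℕ, ∃ y, IterC S n y x}

/-- The local S-adic subshift `T_S` of the sequence of substitutions `S`:
every finite sub-pattern of the configuration appears in some `ŝ_{[0,n]}(a)`. -/
def LocalSAdic {A : Type*} {d : ℕ} (S : ℕ → Substitution A d) : Set (Config A d) :=
  {x | ∀ U : Finset (Fin d → ℤ), ∃ (n : ℕ) (a : A) (q : RectPattern A d),
    IterP S n (letterPat a) q ∧ OccursIn U x q}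

/-- A sequence of substitutions is effective when the map `i ↦ s_i` is
computable; since the substitutions range over a finite set, this means that
some computable index function into a finite list describes the sequence. -/
def EffectiveSeq {A : Type*} {d : ℕ} (S : ℕ → Substitution A d) : Prop :=
  ∃ (L : List (Substitution A d)) (f : ℕ → ℕ),
    Computable f ∧ ∀ i, L[f i]? = some (S i)

/-- Property A of a set of substitutions `𝒮` (Mozes): any admissible sequence of
substitutions applied to a `2×⋯×2` sub-pattern `l` of an `𝒮`-pattern `p` can be
extended to a sequence of substitutions applied to `p` itself, in such a way
that the blocks deriving from `l` are exactly the prescribed images of `l`. -/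
def HasPropertyA {A : Type*} {d : ℕ} (𝒮 : Set (Substitution A d)) : Prop :=
  ∀ p : RectPattern A d, IsSPattern 𝒮 p →
  ∀ l : RectPattern A d, (∀ m, l.size m = 2) →
  ∀ v : Fin d → ℤ, (∀ u, l.mem u → p.mem (v + u) ∧ p.data (v + u) = l.data u) →
  ∀ (n : ℕ) (σ : ℕ → (Fin d → ℤ) → Substitution A d) (L : ℕ → RectPattern A d),
    L 0 = l →
    (∀ k < n, (∀ u, σ k u ∈ 𝒮) ∧ NImageP (σ k) (L k) (L (k+1))) →
    ∃ (σ' : ℕ → (Fin d → ℤ) → Substitution A d) (P : ℕ → RectPattern A d)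
      (w : ℕ → Fin d → ℤ),
      P 0 = p ∧ w 0 = v ∧
      (∀ k < n, (∀ u, σ' k u ∈ 𝒮) ∧ NImageP (σ' k) (P k) (P (k+1)) ∧
        (∀ u, (L k).mem u → σ' k (w k + u) = σ k u) ∧
        w (k+1) = nphi (σ' k) (P k).data (w k)) ∧
      ∀ k ≤ n, ∀ u, (L k).mem u →
        (P k).mem (w k + u) ∧ (P k).data (w k + u) = (L k).data u

/-- The marked alphabet `A' = A × S²` used to record substitutions. -/
abbrev MarkedAlphabet (A : Type*) := A × Substitution A 2 × Substitution A 2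

/-- The marked substitution `s̃` associated to `s`: it has the same supports,
applies `s` on the `A`-component, records `s` in the vertical marker except on
the right-most column (which keeps the previous vertical marker) and records
`s` in the horizontal marker except on the top row (which keeps the previous
horizontal marker). -/
def marked {A : Type*} (s : Substitution A 2) : Substitution (MarkedAlphabet A) 2 :=
  fun b =>
    { size := (s b.1).size
      data := fun u =>
        ((s b.1).data u,
          if u 0 = ((s b.1).size 0 : ℤ) - 1 then b.2.1 else s,
          if u 1 = ((s b.1).size 1 : ℤ) - 1 then b.2.2 else s) }

/-- Letter-to-letter map keeping the `A`-component. -/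
def piLetter {A : Type*} (x : Config (MarkedAlphabet A) 2) : Config A 2 :=
  fun u => (x u).1

/-- Letter-to-letter map keeping the vertical substitution marker. -/
def piV {A : Type*} (x : Config (MarkedAlphabet A) 2) : Config (Substitution A 2) 2 :=
  fun u => (x u).2.1

/-- Letter-to-letter map keeping the horizontal substitution marker. -/
def piH {A : Type*} (x : Config (MarkedAlphabet A) 2) : Config (Substitution A 2) 2 :=
  fun u => (x u).2.2

/-- The synchronized subshift `T̃_{S̃}`: configurations of the local subshift
generated by the marked substitutions whose horizontal marker is constant
along columns and whose vertical marker is constant along rows. -/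
def Synchronized {A : Type*} (𝒮 : Set (Substitution A 2)) :
    Set (Config (MarkedAlphabet A) 2) :=
  {x | x ∈ LocalSetSubshift (marked '' 𝒮) ∧
    ∀ u : Fin 2 → ℤ,
      piH x u = piH x (u + axisPt 1 1) ∧ piV x u = piV x (u + axisPt 0 1)}

-- PART 1: countability of sofic subshifts

section Part1
variable {d : ℕ}

/-- Window lemma: a continuous map from a fullshift over a finite alphabet to a
discrete space depends only on finitely many coordinates. -/
lemma window_lemma {n : ℕ} {A : Type} (g : Config (Fin n) d → A)
    (hg : @Continuous _ _ (configTop (Fin n) d) ⊥ g) :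
    ∃ W : Finset (Fin d → ℤ), ∀ x y : Config (Fin n) d,
      (∀ w ∈ W, x w = y w) → g x = g y := by
  classical
  letI : TopologicalSpace (Fin n) := ⊥
  letI : TopologicalSpace A := ⊥
  haveI : DiscreteTopology (Fin n) := ⟨rfl⟩
  haveI : DiscreteTopology A := ⟨rfl⟩
  haveI : CompactSpace (Config (Fin n) d) := by
    unfold Config
    infer_instance
  have hg' : Continuous g := hg
  have key : ∀ x : Config (Fin n) d, ∃ W : Finset (Fin d → ℤ),
      ∀ y, (∀ i ∈ W, y i = x i) → g y = g x := by
    intro x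
    have hnx : g ⁻¹' {g x} ∈ nhds x :=
      hg'.continuousAt.preimage_mem_nhds ((isOpen_discrete {g x}).mem_nhds rfl)
    rw [nhds_pi, Filter.mem_pi] at hnx
    obtain ⟨I, hIfin, t, ht, hsub⟩ := hnx
    refine ⟨hIfin.toFinset, fun y hy => ?_⟩
    have : y ∈ I.pi t := by
      intro i hi
      rw [hy i (hIfin.mem_toFinset.mpr hi)]
      have := ht i
      rw [nhds_discrete] at this
      exact this
    exact hsub this
  choose W hW using key
  set U : Config (Fin n) d → Set (Config (Fin n) d) :=
    fun x => {y | ∀ i ∈ W x, y i = x i} with hU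
  have hUopen : ∀ x, IsOpen (U x) := by
    intro x
    have : U x = ⋂ i ∈ (W x : Finset (Fin d → ℤ)), (fun y => y i) ⁻¹' {x i} := by
      ext y; simp [hU]
    rw [this]
    exact isOpen_biInter_finset fun i _ =>
      (continuous_apply i).isOpen_preimage _ (isOpen_discrete _)
  have hcover : Set.univ ⊆ ⋃ x, U x :=
    fun x _ => Set.mem_iUnion.mpr ⟨x, fun i _ => rfl⟩
  obtain ⟨s, hs⟩ := isCompact_univ.elim_finite_subcover U hUopen hcover
  refine ⟨s.biUnion W, fun x y hxy => ?_⟩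
  have hx := hs (Set.mem_univ x)
  simp only [Set.mem_iUnion] at hx
  obtain ⟨z, hz, hxz⟩ := hx
  have hyz : y ∈ U z := by
    intro i hi
    rw [← hxy i (Finset.mem_biUnion.mpr ⟨z, hz, hi⟩)]
    exact hxz i hi
  rw [hW z x hxz, hW z y hyz]

/-- Countable code type for sofic subshifts. -/
def SoficCode (A : Type) (d : ℕ) : Type :=
  Option (Σ n : ℕ, Finset (Pattern (Fin (n+1)) d) ×
    Σ W : Finset (Fin d → ℤ), (({w : Fin d → ℤ // w ∈ W} → Fin (n+1)) → A))

instance (A : Type) [Fintype A] (d : ℕ) : Countable (SoficCode A d) := by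
  unfold SoficCode
  infer_instance

/-- Decoding a code to a set of configurations. -/
def soficDecode {A : Type} {d : ℕ} : SoficCode A d → Set (Config A d)
  | none => ∅
  | some ⟨n, F, W, Φ⟩ =>
      (fun x : Config (Fin (n+1)) d => fun u => Φ (fun w => x (w.1 + u))) ''
        avoiding (↑F : Set (Pattern (Fin (n+1)) d))

lemma sofic_countable (A : Type) [Fintype A] (d : ℕ) :
    Set.Countable {T : Set (Config A d) | IsSofic T} := by
  classical
  apply (Set.countable_range (soficDecode (A := A) (d := d))).mono
  rintro T ⟨n, T', π, ⟨F, hF⟩, ⟨hc, hcomm⟩, hT⟩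
  cases n with
  | zero =>
      refine ⟨none, ?_⟩
      have hT' : T' = ∅ := by
        ext x
        exact absurd trivial (fun _ => (x (fun _ => 0)).elim0)
      simp [soficDecode, hT, hT', Set.image_empty]
  | succ n =>
      have hgc : @Continuous _ _ (configTop (Fin (n+1)) d) ⊥
          (fun x : Config (Fin (n+1)) d => π x (fun _ => 0)) := by
        letI : TopologicalSpace A := ⊥
        exact Continuous.comp (continuous_apply (fun _ => (0:ℤ))) hc
      obtain ⟨W, hW⟩ := window_lemma _ hgc
      set g : Config (Fin (n+1)) d → A := fun x => π x (fun _ => 0) with hgdef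
      refine ⟨some ⟨n, F, W, fun f =>
        g (fun u => if h : u ∈ W then f ⟨u, h⟩ else 0)⟩, ?_⟩
      have hπ : (fun x : Config (Fin (n+1)) d => fun u =>
          g (fun u' => if h : u' ∈ W then x (u' + u) else 0)) = π := by
        funext x u
        have h1 : g (fun u' => if h : u' ∈ W then x (u' + u) else 0)
            = g (shift u x) := by
          apply hW
          intro w hw
          simp [hw, shift]
        rw [h1, hgdef]
        show π (shift u x) (fun _ => 0) = π x u
        rw [hcomm u x]
        show π x ((fun _ => 0) + u) = π x u
        congr 1
        funext l
        simp
      show soficDecode _ = T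
      simp only [soficDecode]
      rw [hT, hF]
      exact congrArg (fun f => f '' avoiding (↑F : Set (Pattern (Fin (n+1)) d))) hπ

end Part1
-- PART 2: an explicit family of S-adic subshifts

section Part2

/-- The point `z` of `ℤ^1`. -/
def pt (z : ℤ) : Fin 1 → ℤ := fun _ => z

def bite (t : Bool) : Fin 3 := if t then 1 else 0

/-- The substitution `0 ↦ 0`, `1 ↦ 1`, `m ↦ c m c` (with `m = 2`). -/
def tau (c : Bool) : Substitution (Fin 3) 1 := fun a =>
  if a = 2 then ⟨fun _ => 3, fun u => if u 0 = 1 then 2 else bite c⟩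
  else ⟨fun _ => 1, fun _ => a⟩

def Pdata (f : ℕ → Bool) (k : ℕ) (z : ℤ) : Fin 3 :=
  if z = (k : ℤ) then 2 else bite (f ((z - k).natAbs - 1))

def Pat (f : ℕ → Bool) (k : ℕ) : RectPattern (Fin 3) 1 :=
  ⟨fun _ => 2 * k + 1, fun u => Pdata f k (u 0)⟩

def SSeq (b : ℕ → Bool) : ℕ → Substitution (Fin 3) 1 := fun i => tau (b i)

def consB (c : Bool) (f : ℕ → Bool) : ℕ → Bool :=
  fun m => if m = 0 then c else f (m - 1)

def xcfg (b : ℕ → Bool) : Config (Fin 3) 1 :=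
  fun u => if u 0 = 0 then 2 else bite (b ((u 0).natAbs - 1))

def AgreesWith (p : RectPattern (Fin 3) 1) (f : ℕ → Bool) (k : ℕ) : Prop :=
  p.size 0 = 2 * k + 1 ∧
    ∀ z : ℤ, 0 ≤ z → z < 2 * k + 1 → p.data (pt z) = Pdata f k z

lemma fin1_all (l : Fin 1) : l = 0 := Subsingleton.elim _ _

lemma fin1_fun_eq (u : Fin 1 → ℤ) : u = pt (u 0) :=
  funext fun l => by rw [fin1_all l]; rfl

lemma axisPt_zero : axisPt (d := 1) 0 = pt :=
  funext fun r => funext fun l => by rw [fin1_all l]; simp [axisPt, pt]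

lemma tau_size (c : Bool) (a : Fin 3) (l : Fin 1) :
    (tau c a).size l = if a = 2 then 3 else 1 := by
  by_cases h : a = 2 <;> simp [tau, h]

lemma tau_data_ne {a : Fin 3} (c : Bool) (h : a ≠ 2) (j : Fin 1 → ℤ) :
    (tau c a).data j = a := by simp [tau, h]

lemma tau_data_two (c : Bool) (j : Fin 1 → ℤ) :
    (tau c 2).data j = if j 0 = 1 then 2 else bite c := by simp [tau]

lemma bite_ne_two (t : Bool) : bite t ≠ 2 := by cases t <;> decide

lemma bite_inj {t t' : Bool} (h : bite t = bite t') : t = t' := by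
  cases t <;> cases t' <;> first | rfl | (exfalso; revert h; decide)

lemma cum_formula (g : ℤ → ℕ) (k t : ℕ)
    (hg : ∀ j : ℕ, j < t → g j = if j = k then 3 else 1) :
    cum g t = t + if k < t then 2 else 0 := by
  have h0 : (0:ℤ) ≤ (t:ℤ) := Int.natCast_nonneg t
  rw [cum, if_pos h0, Int.toNat_natCast]
  have hcongr : ∀ j ∈ Finset.range t, (g (j:ℤ) : ℤ) = 1 + if j = k then 2 else 0 := by
    intro j hj
    rw [hg j (Finset.mem_range.mp hj)]
    split <;> simp
  rw [Finset.sum_congr rfl hcongr, Finset.sum_add_distrib, Finset.sum_const,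
    Finset.card_range, Finset.sum_ite_eq' (Finset.range t) k (fun _ => (2:ℤ))]
  simp [Finset.mem_range]

lemma nphi_tau (c : Bool) (F : (Fin 1 → ℤ) → Fin 3) (i : Fin 1 → ℤ) :
    nphi (fun _ => tau c) F i
      = pt (cum (fun r => ((tau c) (F (pt r))).size 0) (i 0)) := by
  funext l
  rw [fin1_all l]
  simp only [nphi, axisPt_zero]
  rfl

lemma gp_eq {p : RectPattern (Fin 3) 1} {f : ℕ → Bool} {k : ℕ} (c : Bool)
    (h : AgreesWith p f k) :
    ∀ j : ℕ, j < 2*k+1 → ((tau c) (p.data (pt j))).size 0 = if j = k then 3 else 1 := by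
  intro j hj
  rw [h.2 j (by positivity) (by exact_mod_cast hj), tau_size]
  by_cases hjk : j = k
  · simp [Pdata, hjk]
  · have hne : ((j:ℤ)) ≠ (k:ℤ) := by exact_mod_cast hjk
    simp [Pdata, hne, bite_ne_two, hjk]

lemma cum_gp {p : RectPattern (Fin 3) 1} {f : ℕ → Bool} {k : ℕ} (c : Bool)
    (h : AgreesWith p f k) (t : ℕ) (ht : t ≤ 2*k+1) :
    cum (fun r => ((tau c) (p.data (pt r))).size 0) t
      = t + if k < t then 2 else 0 :=
  cum_formula _ k t (fun j hj => gp_eq c h j (lt_of_lt_of_le hj ht))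

end Part2
section Part2b

lemma Pdata_cons_low {c : Bool} {f : ℕ → Bool} {k : ℕ} {z : ℤ}
    (h0 : 0 ≤ z) (h : z < (k:ℤ)) :
    Pdata (consB c f) (k+1) z = Pdata f k z := by
  have h1 : z ≠ ((k+1:ℕ):ℤ) := by omega
  have h2 : z ≠ (k:ℤ) := by omega
  rw [Pdata, Pdata, if_neg h1, if_neg h2]
  congr 1
  show consB c f ((z - ((k+1:ℕ):ℤ)).natAbs - 1) = f ((z - (k:ℤ)).natAbs - 1)
  have h3 : (z - ((k+1:ℕ):ℤ)).natAbs - 1 ≠ 0 := by omega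
  rw [consB, if_neg h3]
  congr 1
  omega

lemma Pdata_cons_center {c : Bool} {f : ℕ → Bool} {k : ℕ} :
    Pdata (consB c f) (k+1) ((k:ℤ)+1) = 2 := by
  rw [Pdata, if_pos (by push_cast; ring)]

lemma Pdata_cons_edge {c : Bool} {f : ℕ → Bool} {k : ℕ} {z : ℤ}
    (h : z = (k:ℤ) ∨ z = (k:ℤ)+2) :
    Pdata (consB c f) (k+1) z = bite c := by
  rw [Pdata, if_neg (by omega)]
  congr 1
  show consB c f ((z - ((k+1:ℕ):ℤ)).natAbs - 1) = c
  have h3 : (z - ((k+1:ℕ):ℤ)).natAbs - 1 = 0 := by omega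
  rw [h3, consB, if_pos rfl]

lemma Pdata_cons_high {c : Bool} {f : ℕ → Bool} {k : ℕ} {z : ℤ}
    (h : (k:ℤ)+2 < z) :
    Pdata (consB c f) (k+1) z = bite (f ((z - 2 - k).natAbs - 1)) := by
  rw [Pdata, if_neg (by omega)]
  congr 1
  show consB c f ((z - ((k+1:ℕ):ℤ)).natAbs - 1) = f ((z - 2 - (k:ℤ)).natAbs - 1)
  rw [consB, if_neg (by omega)]
  congr 1
  omega

lemma compat_triv (σ : (Fin 1 → ℤ) → Substitution (Fin 3) 1)
    (p : RectPattern (Fin 3) 1) : NCompatP σ p := by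
  intro i j _ _ l hl
  have hij : i = j := funext fun l' => by rw [fin1_all l', ← fin1_all l]; exact hl
  rw [hij]

lemma step_pat (c : Bool) (f : ℕ → Bool) (k : ℕ) :
    ImageP (tau c) (Pat f k) (Pat (consB c f) (k+1)) := by
  have hAg : AgreesWith (Pat f k) f k := ⟨rfl, fun z _ _ => rfl⟩
  refine ⟨compat_triv _ _, ?_, ?_⟩
  · intro l
    rw [nphi_tau]
    show ((2*(k+1)+1 : ℕ) : ℤ)
      = cum (fun r => ((tau c) ((Pat f k).data (pt r))).size 0) ((2*k+1 : ℕ) : ℤ)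
    rw [cum_gp c hAg (2*k+1) le_rfl, if_pos (by omega : k < 2*k+1)]
    push_cast; ring
  · intro i hi j hj
    obtain ⟨t, hti⟩ : ∃ t : ℕ, i 0 = (t:ℤ) := ⟨(i 0).toNat, by have := (hi 0).1; omega⟩
    have hieq : i = pt (t:ℤ) := by rw [fin1_fun_eq i, hti]
    have ht : t < 2*k+1 := by
      have h2 : i 0 < ((2*k+1 : ℕ):ℤ) := (hi 0).2
      omega
    rw [hieq] at hj ⊢
    rw [nphi_tau]
    have hj0 : 0 ≤ j 0 ∧ j 0 < (((tau c) (Pdata f k (t:ℤ))).size 0 : ℤ) := hj 0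
    show Pdata (consB c f) (k+1)
        (cum (fun r => ((tau c) ((Pat f k).data (pt r))).size 0) (t:ℤ) + j 0)
      = ((tau c) (Pdata f k (t:ℤ))).data j
    rcases lt_trichotomy t k with h1 | h1 | h1
    · -- t < k
      have hne : ((t:ℤ)) ≠ (k:ℤ) := by omega
      have hd : Pdata f k (t:ℤ) = bite (f (((t:ℤ) - k).natAbs - 1)) := by
        rw [Pdata, if_neg hne]
      have hb := bite_ne_two (f (((t:ℤ) - k).natAbs - 1))
      have hsz : ((tau c) (Pdata f k (t:ℤ))).size 0 = 1 := by
        rw [hd, tau_size, if_neg hb]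
      have hjz : j 0 = 0 := by rw [hsz] at hj0; omega
      rw [cum_gp c hAg t (by omega), if_neg (by omega : ¬ k < t), hjz, add_zero,
        hd, tau_data_ne c hb, Pdata_cons_low (by positivity) (by omega)]
      exact hd
    · -- t = k
      subst h1
      have hd : Pdata f t (t:ℤ) = 2 := by simp [Pdata]
      have hsz : ((tau c) (Pdata f t (t:ℤ))).size 0 = 3 := by
        rw [hd, tau_size, if_pos rfl]
      rw [hsz] at hj0
      rw [cum_gp c hAg t (by omega), if_neg (by omega : ¬ t < t), hd, tau_data_two]
      have h3 : j 0 = 0 ∨ j 0 = 1 ∨ j 0 = 2 := by omega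
      rcases h3 with h3 | h3 | h3 <;> rw [h3]
      · rw [if_neg (by norm_num), Pdata_cons_edge (Or.inl (by push_cast; ring))]
      · rw [if_pos rfl]
        have : ((t:ℕ):ℤ) + ((2*t+1:ℕ):ℤ) - ((2*t+1:ℕ):ℤ) + 1 = (t:ℤ)+1 := by ring
        show Pdata (consB c f) (t+1) ((t:ℤ) + 1) = 2
        exact Pdata_cons_center
      · rw [if_neg (by norm_num), Pdata_cons_edge (Or.inr (by push_cast; ring))]
    · -- k < t
      have hne : ((t:ℤ)) ≠ (k:ℤ) := by omega
      have hd : Pdata f k (t:ℤ) = bite (f (((t:ℤ) - k).natAbs - 1)) := by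
        rw [Pdata, if_neg hne]
      have hb := bite_ne_two (f (((t:ℤ) - k).natAbs - 1))
      have hsz : ((tau c) (Pdata f k (t:ℤ))).size 0 = 1 := by
        rw [hd, tau_size, if_neg hb]
      have hjz : j 0 = 0 := by rw [hsz] at hj0; omega
      rw [cum_gp c hAg t (by omega), if_pos (by omega : k < t), hjz, add_zero,
        hd, tau_data_ne c hb, Pdata_cons_high (by omega)]
      congr 2
      omega

end Part2b
section Part2c

@[simp] lemma pt_apply (z : ℤ) (l : Fin 1) : pt z l = z := rfl

lemma step_agree {c : Bool} {f : ℕ → Bool} {k : ℕ}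
    {p q : RectPattern (Fin 3) 1} (hAg : AgreesWith p f k)
    (h : ImageP (tau c) p q) : AgreesWith q (consB c f) (k+1) := by
  obtain ⟨hcomp, hsize, hdata⟩ := h
  set G : ℤ → ℕ := fun r => ((tau c) (p.data (pt r))).size 0 with hG
  have hq : q.size 0 = 2*(k+1)+1 := by
    have h0 := hsize 0
    rw [nphi_tau] at h0
    have h1 : (q.size 0 : ℤ) = cum G ((2*k+1 : ℕ):ℤ) := by
      rw [h0]
      show cum G ((p.size 0 : ℕ) : ℤ) = _
      rw [hAg.1]
    rw [cum_gp c hAg _ le_rfl, if_pos (by omega : k < 2*k+1)] at h1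
    omega
  refine ⟨hq, ?_⟩
  have hmem : ∀ r : ℤ, 0 ≤ r → r < 2*k+1 → p.mem (pt r) := by
    intro r h0 h1 l
    rw [fin1_all l]
    refine ⟨h0, ?_⟩
    show r < (p.size 0 : ℤ)
    rw [hAg.1]
    push_cast
    omega
  have happ : ∀ r m : ℤ, 0 ≤ r → r < 2*k+1 → 0 ≤ m →
      m < (((tau c) (p.data (pt r))).size 0 : ℤ) →
      q.data (pt (cum G r + m)) = ((tau c) (p.data (pt r))).data (pt m) := by
    intro r m h0 h1 h2 h3
    have hd := hdata (pt r) (hmem r h0 h1) (pt m)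
      (fun l => by rw [fin1_all l]; exact ⟨h2, h3⟩)
    rw [nphi_tau] at hd
    have harg : pt (cum G ((pt r) 0)) + pt m = pt (cum G r + m) := by
      funext l; rfl
    rw [harg] at hd
    exact hd
  intro z hz0 hz1
  obtain ⟨t, rfl⟩ : ∃ t : ℕ, z = (t:ℤ) := ⟨z.toNat, by omega⟩
  have ht : t < 2*k+3 := by omega
  rcases lt_trichotomy t k with h1 | h1 | h1
  · -- t < k : single block
    have hpd : p.data (pt (t:ℤ)) = Pdata f k (t:ℤ) :=
      hAg.2 _ (by positivity) (by push_cast; omega)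
    have hne : ((t:ℤ)) ≠ (k:ℤ) := by omega
    have hdv : Pdata f k (t:ℤ) = bite (f (((t:ℤ) - k).natAbs - 1)) := by
      rw [Pdata, if_neg hne]
    have hb := bite_ne_two (f (((t:ℤ) - k).natAbs - 1))
    have hsz : (((tau c) (p.data (pt (t:ℤ)))).size 0 : ℤ) = 1 := by
      rw [hpd, hdv, tau_size, if_neg hb]
      norm_num
    have key := happ (t:ℤ) 0 (by positivity) (by push_cast; omega) le_rfl
      (by rw [hsz]; norm_num)
    rw [add_zero, cum_gp c hAg t (by omega), if_neg (by omega : ¬ k < t),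
      add_zero, hpd, hdv, tau_data_ne c hb] at key
    rw [key, Pdata_cons_low (by positivity) (by omega), Pdata, if_neg hne]
  · -- t = k : left edge of center block
    subst h1
    have hpd : p.data (pt (t:ℤ)) = 2 := by
      rw [hAg.2 _ (by positivity) (by push_cast; omega), Pdata, if_pos rfl]
    have key := happ (t:ℤ) 0 (by positivity) (by push_cast; omega) le_rfl
      (by rw [hpd, tau_size, if_pos rfl]; norm_num)
    rw [add_zero, cum_gp c hAg t (by omega), if_neg (by omega : ¬ t < t),
      add_zero, hpd, tau_data_two] at key
    simp only [pt_apply] at key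
    rw [key]; show (if (0:ℤ) = 1 then (2:Fin 3) else bite c) = _
    rw [if_neg (by norm_num), Pdata_cons_edge (Or.inl rfl)]
  · by_cases h2 : t ≤ k + 2
    · -- t = k+1 or k+2 : inside center block (r = k, offset t - k)
      have hpd : p.data (pt (k:ℤ)) = 2 := by
        rw [hAg.2 _ (by positivity) (by push_cast; omega), Pdata, if_pos rfl]
      have key := happ (k:ℤ) ((t:ℤ) - k) (by positivity) (by push_cast; omega)
        (by omega) (by rw [hpd, tau_size, if_pos rfl]; push_cast; omega)
      rw [cum_gp c hAg k (by omega), if_neg (by omega : ¬ k < k), add_zero,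
        hpd, tau_data_two] at key
      simp only [pt_apply] at key
      have harg : (k:ℤ) + ((t:ℤ) - k) = (t:ℤ) := by ring
      rw [harg] at key
      rw [key]
      obtain ht' | ht' : t = k+1 ∨ t = k+2 := by omega
      · subst ht'
        show (if ((k+1:ℕ):ℤ) - (k:ℤ) = 1 then (2:Fin 3) else bite c) = _
        rw [if_pos (by push_cast; ring)]
        rw [show ((k+1:ℕ):ℤ) = (k:ℤ)+1 from by push_cast; ring, Pdata_cons_center]
      · subst ht'
        show (if ((k+2:ℕ):ℤ) - (k:ℤ) = 1 then (2:Fin 3) else bite c) = _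
        rw [if_neg (by push_cast; omega),
          Pdata_cons_edge (Or.inr (by push_cast; ring))]
    · -- t > k+2 : single block at r = t-2
      have hpd : p.data (pt ((t-2 : ℕ):ℤ)) = Pdata f k ((t-2:ℕ):ℤ) :=
        hAg.2 _ (by positivity) (by push_cast; omega)
      have hne : (((t-2:ℕ):ℤ)) ≠ (k:ℤ) := by omega
      have hdv : Pdata f k ((t-2:ℕ):ℤ)
          = bite (f ((((t-2:ℕ):ℤ) - k).natAbs - 1)) := by
        rw [Pdata, if_neg hne]
      have hb := bite_ne_two (f ((((t-2:ℕ):ℤ) - k).natAbs - 1))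
      have hsz : (((tau c) (p.data (pt ((t-2:ℕ):ℤ)))).size 0 : ℤ) = 1 := by
        rw [hpd, hdv, tau_size, if_neg hb]
        norm_num
      have key := happ ((t-2:ℕ):ℤ) 0 (by positivity) (by push_cast; omega) le_rfl
        (by rw [hsz]; norm_num)
      rw [add_zero, cum_gp c hAg (t-2) (by omega), if_pos (by omega : k < t-2),
        hpd, hdv, tau_data_ne c hb] at key
      have harg : ((t-2:ℕ):ℤ) + ((2:ℕ):ℤ) = (t:ℤ) := by push_cast; omega
      rw [show (((t-2:ℕ):ℤ) + 2 : ℤ) = (t:ℤ) from by push_cast; omega] at key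
      rw [key, Pdata_cons_high (by omega)]
      congr 2
      omega

end Part2c
section Part2d

lemma cum_tau_const {c : Bool} (G : ℤ → ℕ) (k : ℕ)
    (hG : ∀ j : ℕ, j < k → G j = if j = k then 3 else 1) : True := trivial

lemma step_letter (c : Bool) (f : ℕ → Bool) (hf : f 0 = c) :
    ImageP (tau c) (letterPat 2) (Pat f 1) := by
  have hG : ∀ j : ℕ, j < 1 →
      ((tau c) ((letterPat (2 : Fin 3)).data (pt (j:ℤ)))).size 0
        = if j = 0 then 3 else 1 := by
    intro j hj
    have hj0 : j = 0 := by omega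
    subst hj0
    rw [if_pos rfl]
    show (tau c 2).size 0 = 3
    rw [tau_size, if_pos rfl]
  refine ⟨compat_triv _ _, ?_, ?_⟩
  · intro l
    rw [nphi_tau]
    show ((2*1+1 : ℕ) : ℤ)
      = cum (fun r => ((tau c) ((letterPat (2:Fin 3)).data (pt r))).size 0) ((1:ℕ):ℤ)
    rw [cum_formula _ 0 1 hG]
    norm_num
  · intro i hi j hj
    have hi0 : i 0 = 0 := by
      have h1 := (hi 0).1
      have h2 : i 0 < ((1:ℕ):ℤ) := (hi 0).2
      omega
    have hieq : i = pt 0 := by rw [fin1_fun_eq i, hi0]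
    rw [hieq] at hj ⊢
    rw [nphi_tau]
    have hc0 : cum (fun r => ((tau c) ((letterPat (2:Fin 3)).data (pt r))).size 0)
        ((pt 0) 0) = 0 := by
      have := cum_formula
        (fun r => ((tau c) ((letterPat (2:Fin 3)).data (pt r))).size 0) 0 0
        (fun j hj => absurd hj (Nat.not_lt_zero j))
      simpa using this
    rw [hc0]
    have hj0 : 0 ≤ j 0 ∧ j 0 < (((tau c) (2:Fin 3)).size 0 : ℤ) := hj 0
    rw [tau_size, if_pos rfl] at hj0
    show Pdata f 1 ((pt 0 + j) 0) = ((tau c) (2:Fin 3)).data j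
    have hsum : (pt 0 + j) 0 = j 0 := by show 0 + j 0 = j 0; ring
    rw [hsum, tau_data_two]
    have h3 : j 0 = 0 ∨ j 0 = 1 ∨ j 0 = 2 := by
      have := hj0.2
      omega
    rcases h3 with h3 | h3 | h3 <;> rw [h3]
    · rw [if_neg (by norm_num), Pdata, if_neg (by norm_num)]
      have : ((0:ℤ) - (1:ℕ)).natAbs - 1 = 0 := by omega
      rw [this, hf]
    · rw [if_pos rfl, Pdata, if_pos (by norm_num)]
    · rw [if_neg (by norm_num), Pdata, if_neg (by norm_num)]
      have : ((2:ℤ) - (1:ℕ)).natAbs - 1 = 0 := by omega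
      rw [this, hf]

lemma step_small {c : Bool} {p q : RectPattern (Fin 3) 1}
    (h1 : p.size 0 = 1) (h2 : p.data (pt 0) ≠ 2)
    (h : ImageP (tau c) p q) : q.size 0 = 1 ∧ q.data (pt 0) = p.data (pt 0) := by
  obtain ⟨_, hsize, hdata⟩ := h
  set G : ℤ → ℕ := fun r => ((tau c) (p.data (pt r))).size 0 with hG
  have hGf : ∀ j : ℕ, j < 1 → G j = if j = 1 then 3 else 1 := by
    intro j hj
    have hj0 : j = 0 := by omega
    subst hj0
    rw [if_neg (by norm_num)]
    show (tau c (p.data (pt 0))).size 0 = 1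
    rw [tau_size, if_neg h2]
  have hq : q.size 0 = 1 := by
    have h0 := hsize 0
    rw [nphi_tau] at h0
    have h1' : (q.size 0 : ℤ) = cum G ((1:ℕ):ℤ) := by
      rw [h0]
      show cum G ((p.size 0 : ℕ) : ℤ) = _
      rw [h1]
    rw [cum_formula G 1 1 hGf] at h1'
    omega
  refine ⟨hq, ?_⟩
  have hmem : p.mem (pt 0) := by
    intro l
    rw [fin1_all l]
    refine ⟨le_refl 0, ?_⟩
    show (0:ℤ) < (p.size 0 : ℤ)
    rw [h1]
    norm_num
  have hjc : ∀ l, 0 ≤ (pt 0) l ∧ (pt 0) l < (((tau c) (p.data (pt 0))).size l : ℤ) := by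
    intro l
    rw [fin1_all l]
    refine ⟨le_refl 0, ?_⟩
    rw [tau_size, if_neg h2]
    norm_num
  have key := hdata (pt 0) hmem (pt 0) hjc
  rw [nphi_tau] at key
  have hc0 : cum G ((pt (0:ℤ)) 0) = 0 := by
    have := cum_formula G 1 0 (fun j hj => absurd hj (Nat.not_lt_zero j))
    simpa using this
  have harg : pt (cum G ((pt (0:ℤ)) 0)) + pt 0 = pt 0 := by
    funext l
    show cum G ((pt (0:ℤ)) 0) + 0 = 0
    rw [hc0]
    ring
  rw [harg] at key
  rw [key, tau_data_ne c h2]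

def Fb (b : ℕ → Bool) (n : ℕ) (f : ℕ → Bool) : ℕ → Bool :=
  fun i => if i ≤ n then b i else f (i - (n+1))

lemma agrees_congr {q : RectPattern (Fin 3) 1} {f g : ℕ → Bool} {k : ℕ}
    (h : ∀ m, f m = g m) (hA : AgreesWith q f k) : AgreesWith q g k := by
  have hfg : f = g := funext h
  rwa [hfg] at hA

lemma Pat_congr {f g : ℕ → Bool} (k : ℕ) (h : ∀ m, f m = g m) :
    Pat f k = Pat g k := by
  have hfg : f = g := funext h
  rw [hfg]

lemma Fb_cons (b : ℕ → Bool) (n : ℕ) (f : ℕ → Bool) :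
    ∀ m, Fb b n (consB (b (n+1)) f) m = Fb b (n+1) f m := by
  intro m
  rcases Nat.lt_trichotomy m (n+1) with h | h | h
  · have h' : m ≤ n := by omega
    simp [Fb, h', (by omega : m ≤ n+1)]
  · subst h
    simp [Fb, consB, (by omega : ¬ (n+1 ≤ n))]
  · simp only [Fb, consB, if_neg (by omega : ¬ m ≤ n),
      if_neg (by omega : ¬ m ≤ n+1), if_neg (by omega : ¬ (m - (n+1) = 0))]
    congr 1

lemma iter_pat (b : ℕ → Bool) : ∀ (n : ℕ) (f : ℕ → Bool) (k : ℕ),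
    IterP (SSeq b) n (Pat f k) (Pat (Fb b n f) (k+n+1))
  | 0, f, k => by
      have h := step_pat (b 0) f k
      have he : Pat (consB (b 0) f) (k+1) = Pat (Fb b 0 f) (k+0+1) := by
        apply Pat_congr
        intro m
        cases m with
        | zero => simp [consB, Fb]
        | succ m => simp [consB, Fb]
      show ImageP (SSeq b 0) (Pat f k) (Pat (Fb b 0 f) (k+0+1))
      rw [← he]
      exact h
  | n+1, f, k => by
      refine ⟨Pat (consB (b (n+1)) f) (k+1), step_pat (b (n+1)) f k, ?_⟩
      have h := iter_pat b n (consB (b (n+1)) f) (k+1)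
      have he : Pat (Fb b n (consB (b (n+1)) f)) (k+1+n+1)
          = Pat (Fb b (n+1) f) (k+(n+1)+1) := by
        have hk : k+1+n+1 = k+(n+1)+1 := by omega
        rw [hk]
        exact Pat_congr _ (Fb_cons b n f)
      rwa [he] at h

lemma iter_agree (b : ℕ → Bool) : ∀ (n : ℕ) (p q : RectPattern (Fin 3) 1)
    (f : ℕ → Bool) (k : ℕ),
    AgreesWith p f k → IterP (SSeq b) n p q → AgreesWith q (Fb b n f) (k+n+1)
  | 0, p, q, f, k, hA, h => by
      have h' : ImageP (tau (b 0)) p q := h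
      refine agrees_congr ?_ (step_agree hA h')
      intro m
      cases m with
      | zero => simp [consB, Fb]
      | succ m => simp [consB, Fb]
  | n+1, p, q, f, k, hA, h => by
      obtain ⟨r, h1, h2⟩ := h
      have h1' : ImageP (tau (b (n+1))) p r := h1
      have hrec := iter_agree b n r q (consB (b (n+1)) f) (k+1)
        (step_agree hA h1') h2
      have hk : k+1+n+1 = k+(n+1)+1 := by omega
      rw [hk] at hrec
      exact agrees_congr (Fb_cons b n f) hrec

lemma iter_small (b : ℕ → Bool) : ∀ (n : ℕ) (p q : RectPattern (Fin 3) 1),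
    p.size 0 = 1 → p.data (pt 0) ≠ 2 → IterP (SSeq b) n p q → q.size 0 = 1
  | 0, p, q, h1, h2, h => (step_small h1 h2 h).1
  | n+1, p, q, h1, h2, h => by
      obtain ⟨r, hr, hrec⟩ := h
      obtain ⟨hr1, hr2⟩ := step_small h1 h2 (hr : ImageP (tau (b (n+1))) p r)
      exact iter_small b n r q hr1 (by rw [hr2]; exact h2) hrec

lemma iter_letter (b : ℕ → Bool) (n : ℕ) :
    IterP (SSeq b) n (letterPat 2) (Pat b (n+1)) := by
  cases n with
  | zero =>
      show ImageP (SSeq b 0) (letterPat 2) (Pat b 1)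
      exact step_letter (b 0) b rfl
  | succ n =>
      refine ⟨Pat (fun i => b (i+(n+1))) 1, step_letter _ _ (by simp), ?_⟩
      have h := iter_pat b n (fun i => b (i+(n+1))) 1
      have he : Pat (Fb b n fun i => b (i+(n+1))) (1+n+1) = Pat b (n+2) := by
        have hk : 1+n+1 = n+2 := by omega
        rw [hk]
        apply Pat_congr
        intro m
        simp only [Fb]
        split
        · rfl
        · congr 1
          omega
      rwa [he] at h

lemma agree_letter (b : ℕ → Bool) (n : ℕ) (q : RectPattern (Fin 3) 1)
    (h : IterP (SSeq b) n (letterPat 2) q) : AgreesWith q b (n+1) := by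
  have hbase : AgreesWith (letterPat 2) (fun i => b (i+(n+1))) 0 := by
    refine ⟨rfl, ?_⟩
    intro z h0 h1
    have hz : z = 0 := by omega
    subst hz
    show (2 : Fin 3) = Pdata _ 0 0
    simp [Pdata]
  have h2 := iter_agree b n _ q _ 0 hbase h
  have hk : 0+n+1 = n+1 := by omega
  rw [hk] at h2
  refine agrees_congr ?_ h2
  intro m
  simp only [Fb]
  split
  · rfl
  · congr 1
    omega

end Part2d
section Part2e

lemma xcfg_mem (b : ℕ → Bool) : xcfg b ∈ LocalSAdic (SSeq b) := by
  intro U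
  classical
  obtain ⟨N, hub⟩ : ∃ N : ℕ, ∀ u ∈ U, (u 0).natAbs ≤ N :=
    ⟨U.sup (fun u => (u 0).natAbs),
      fun u hu => Finset.le_sup (f := fun u => (u 0).natAbs) hu⟩
  refine ⟨N, 2, Pat b (N+1), iter_letter b N, pt ((N:ℤ)+1), ?_⟩
  intro u hu
  have hu0 : (u 0).natAbs ≤ N := hub u hu
  constructor
  · intro l
    rw [fin1_all l]
    constructor
    · show (0:ℤ) ≤ u 0 + ((N:ℤ)+1)
      omega
    · show u 0 + ((N:ℤ)+1) < ((2*(N+1)+1 : ℕ) : ℤ)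
      push_cast
      omega
  · show (if u 0 + ((N:ℤ)+1) = ((N+1:ℕ):ℤ) then (2:Fin 3)
        else bite (b ((u 0 + ((N:ℤ)+1) - ((N+1:ℕ):ℤ)).natAbs - 1)))
      = (if u 0 = 0 then (2:Fin 3) else bite (b ((u 0).natAbs - 1)))
    by_cases h0 : u 0 = 0
    · rw [if_pos (by push_cast; omega), if_pos h0]
    · rw [if_neg (by push_cast; omega), if_neg h0]
      have harg : (u 0 + ((N:ℤ)+1) - ((N+1:ℕ):ℤ)).natAbs - 1
          = (u 0).natAbs - 1 := by
        push_cast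
        omega
      rw [harg]

lemma xcfg_not_mem {b b' : ℕ → Bool} (j : ℕ) (hj : b j ≠ b' j) :
    xcfg b ∉ LocalSAdic (SSeq b') := by
  intro hmem
  classical
  obtain ⟨n, a, q, hIter, v, hOcc⟩ := hmem {pt 0, pt 1, pt ((j:ℤ)+1)}
  by_cases ha : a = 2
  · subst ha
    have hA := agree_letter b' n q hIter
    have hq := hA.1
    have h0 := hOcc (pt 0) (by simp)
    have h1 := hOcc (pt ((j:ℤ)+1)) (by simp)
    have hm0 : (0:ℤ) ≤ 0 + v 0 ∧ 0 + v 0 < ((q.size 0 : ℕ):ℤ) := h0.1 0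
    rw [hq] at hm0
    push_cast at hm0
    have harg0 : pt 0 + v = pt (v 0) := by
      funext l
      rw [fin1_all l]
      show (0:ℤ) + v 0 = v 0
      ring
    have hd0 := h0.2
    rw [harg0] at hd0
    have hdd : q.data (pt (v 0)) = Pdata b' (n+1) (v 0) :=
      hA.2 (v 0) (by omega) (by push_cast; omega)
    have hx0 : Pdata b' (n+1) (v 0) = 2 := by
      rw [← hdd, hd0]
      show xcfg b (pt 0) = 2
      simp [xcfg, pt]
    have hveq : v 0 = (n:ℤ)+1 := by
      by_contra hne
      rw [Pdata, if_neg (by push_cast; omega)] at hx0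
      exact bite_ne_two _ hx0
    have hm1 : (0:ℤ) ≤ ((j:ℤ)+1) + v 0 ∧ ((j:ℤ)+1) + v 0 < ((q.size 0 : ℕ):ℤ) :=
      h1.1 0
    rw [hq] at hm1
    push_cast at hm1
    have harg1 : pt ((j:ℤ)+1) + v = pt ((j:ℤ)+1 + v 0) := by
      funext l
      rw [fin1_all l]
      rfl
    have hd1 := h1.2
    rw [harg1] at hd1
    have hdd1 : q.data (pt ((j:ℤ)+1+v 0)) = Pdata b' (n+1) ((j:ℤ)+1+v 0) :=
      hA.2 _ (by omega) (by push_cast; omega)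
    have hx1 : Pdata b' (n+1) ((j:ℤ)+1+v 0) = xcfg b (pt ((j:ℤ)+1)) := by
      rw [← hdd1, hd1]
    have hL : Pdata b' (n+1) ((j:ℤ)+1+v 0) = bite (b' j) := by
      rw [Pdata, if_neg (by push_cast; omega)]
      have harg : ((((j:ℤ)+1+v 0)) - ((n+1:ℕ):ℤ)).natAbs - 1 = j := by
        push_cast
        omega
      rw [harg]
    have hR : xcfg b (pt ((j:ℤ)+1)) = bite (b j) := by
      show (if ((j:ℤ)+1) = 0 then (2:Fin 3)
          else bite (b ((((j:ℤ)+1)).natAbs - 1))) = bite (b j)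
      rw [if_neg (by omega)]
      have harg : (((j:ℤ)+1)).natAbs - 1 = j := by omega
      rw [harg]
    rw [hL, hR] at hx1
    exact hj (bite_inj hx1).symm
  · have hsz := iter_small b' n (letterPat a) q rfl ha hIter
    have h0 : (0:ℤ) ≤ 0 + v 0 ∧ 0 + v 0 < ((q.size 0 : ℕ):ℤ) :=
      (hOcc (pt 0) (by simp)).1 0
    have h1 : (0:ℤ) ≤ 1 + v 0 ∧ 1 + v 0 < ((q.size 0 : ℕ):ℤ) :=
      (hOcc (pt 1) (by simp)).1 0
    rw [hsz] at h0 h1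
    push_cast at h0 h1
    omega

lemma not_countable_funBool : ¬ Countable (ℕ → Bool) := by
  intro h
  classical
  have hg : Function.Injective (fun s : Set ℕ => fun n => decide (n ∈ s)) := by
    intro s s' hss
    ext n
    have := congrFun hss n
    simpa using this
  obtain ⟨e, he⟩ := exists_injective_nat (ℕ → Bool)
  exact Function.cantor_injective _ (he.comp hg)

end Part2e
/-- for a fixed finite alphabet and dimension, there are only
countably many sofic subshifts; consequently there exist finite sets of
multidimensional substitutions and sequences over them whose S-adic subshift
is not sofic. -/
theorem sofic_countable_and_exists_nonsofic_sadic
    (A : Type) [Fintype A] (d : ℕ) :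
    Set.Countable {T : Set (Config A d) | IsSofic T} ∧
    ∃ (k d' : ℕ), 1 ≤ d' ∧
      ∃ (𝒮 : Finset (Substitution (Fin k) d')) (S : ℕ → Substitution (Fin k) d'),
        (∀ i, S i ∈ 𝒮) ∧ ¬ IsSofic (LocalSAdic S) := by
  constructor
  · exact sofic_countable A d
  · classical
    refine ⟨3, 1, le_refl 1, ?_⟩
    by_contra hno
    push_neg at hno
    have hS : ∀ b : ℕ → Bool, IsSofic (LocalSAdic (SSeq b)) := by
      intro b
      refine hno {tau false, tau true} (SSeq b) ?_
      intro i
      show tau (b i) ∈ _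
      cases b i
      · exact Finset.mem_insert_self _ _
      · exact Finset.mem_insert_of_mem (Finset.mem_singleton_self _)
    have hcnt := sofic_countable (Fin 3) 1
    haveI := hcnt.to_subtype
    have hinj : Function.Injective (fun b : ℕ → Bool =>
        (⟨LocalSAdic (SSeq b), hS b⟩ :
          {T : Set (Config (Fin 3) 1) | IsSofic T})) := by
      intro b b' h
      have heq : LocalSAdic (SSeq b) = LocalSAdic (SSeq b') :=
        congrArg Subtype.val h
      by_contra hbb
      obtain ⟨j, hj⟩ := Function.ne_iff.mp hbb
      have hx := xcfg_mem b
      rw [heq] at hx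
      exact xcfg_not_mem j hj hx
    haveI : Countable (ℕ → Bool) := hinj.countable
    exact not_countable_funBool this
end

section
/- Let S be a finite set of (A,d)-substitutions and, for each s ∈ S, let s̃ be the marked substitution on the alphabet A' = A × S² which applies s to the A-component and records s in the vertical marker of all columns except the last one of each substituted block (keeping the previous vertical marker in the last column) and records s in the horizontal marker of all rows except the top one of each substituted block (keeping the previous horizontal marker in the top row). Let π : A' → A be the letter-to-letter map keeping the A-component. Then for every sequence S ∈ S^ℕ with associated marked sequence S̃ ∈ S̃^ℕ, the local S-adic subshift T_S equals the image π(T_{S̃}) of the local S̃-adic subshift under the induced factor map. -/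
/-! Common definitions: multidimensional configurations, subshifts, SFTs,
sofic and effective subshifts, multidimensional substitutions,
S-adic subshifts, non-deterministic substitution systems, property A,
and the marking construction of Aubrun–Sablik. -/

open scoped BigOperators

/-! ### Auxiliary development for Statement 10 -/

section Aux

open Classical

/- cum lemmas -/

lemma cum_zero' (g : ℤ → ℕ) : cum g 0 = 0 := by
  simp [cum]

lemma cum_succ' (g : ℤ → ℕ) {r : ℤ} (hr : 0 ≤ r) :
    cum g (r + 1) = cum g r + (g r : ℤ) := by
  have h1 : (0:ℤ) ≤ r + 1 := by omega
  rw [cum, cum, if_pos h1, if_pos hr]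
  have h2 : (r+1).toNat = r.toNat + 1 := by omega
  rw [h2, Finset.sum_range_succ, Int.toNat_of_nonneg hr]

lemma cum_mono' (g : ℤ → ℕ) {a b : ℤ} (ha : 0 ≤ a) (hab : a ≤ b) :
    cum g a ≤ cum g b := by
  rw [cum, cum, if_pos ha, if_pos (ha.trans hab)]
  apply Finset.sum_le_sum_of_subset_of_nonneg
  · exact Finset.range_subset_range.2 (by omega)
  · intro j _ _
    exact Int.natCast_nonneg _

lemma cum_congr' {g g' : ℤ → ℕ} {n : ℤ} (hn : 0 ≤ n)
    (h : ∀ j : ℤ, 0 ≤ j → j < n → g j = g' j) : cum g n = cum g' n := by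
  rw [cum, cum, if_pos hn, if_pos hn]
  refine Finset.sum_congr rfl fun j hj => ?_
  rw [Finset.mem_range] at hj
  rw [h (j : ℤ) (by positivity) (by omega)]

lemma cum_block_unique (g : ℤ → ℕ) {r r' c : ℤ} (hr : 0 ≤ r) (hr' : 0 ≤ r')
    (h1 : cum g r ≤ c) (h2 : c < cum g r + (g r : ℤ))
    (h3 : cum g r' ≤ c) (h4 : c < cum g r' + (g r' : ℤ)) : r = r' := by
  rcases lt_trichotomy r r' with hlt | he | hgt
  · exfalso
    have hle : cum g (r+1) ≤ cum g r' := cum_mono' g (by omega) (by omega)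
    rw [cum_succ' g hr] at hle
    omega
  · exact he
  · exfalso
    have hle : cum g (r'+1) ≤ cum g r := cum_mono' g (by omega) (by omega)
    rw [cum_succ' g hr'] at hle
    omega

/- basic RectPattern helpers -/

lemma mem_of_size_eq' {A B : Type} {p : RectPattern A 2} {q : RectPattern B 2}
    (h : p.size = q.size) (u : Fin 2 → ℤ) : p.mem u ↔ q.mem u := by
  unfold RectPattern.mem
  rw [h]

/- abbreviations for the block decomposition -/

def gf {A : Type} (s : Substitution A 2) (p0 : RectPattern A 2) (l : Fin 2) (r : ℤ) : ℕ :=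
  (s (p0.data (axisPt l r))).size l

def phif {A : Type} (s : Substitution A 2) (p0 : RectPattern A 2) (i : Fin 2 → ℤ)
    (l : Fin 2) : ℤ :=
  cum (gf s p0 l) (i l)

def Dec2 {A : Type} (s : Substitution A 2) (p0 : RectPattern A 2) (u i : Fin 2 → ℤ) : Prop :=
  p0.mem i ∧ ∀ l, phif s p0 i l ≤ u l ∧ u l < phif s p0 i l + (gf s p0 l (i l) : ℤ)

lemma dec2_unique {A : Type} {s : Substitution A 2} {p0 : RectPattern A 2}
    {u i i' : Fin 2 → ℤ} (h : Dec2 s p0 u i) (h' : Dec2 s p0 u i') : i = i' := by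
  funext l
  exact cum_block_unique (gf s p0 l) (h.1 l).1 (h'.1 l).1
    (h.2 l).1 (h.2 l).2 (h'.2 l).1 (h'.2 l).2

/- the relation between a marked pattern and a plain pattern -/

def Rel2 {A : Type} (p : RectPattern (MarkedAlphabet A) 2) (p0 : RectPattern A 2) : Prop :=
  p.size = p0.size ∧ ∀ u, p0.mem u → (p.data u).1 = p0.data u

def Inv2 {A : Type} (𝒮 : Finset (Substitution A 2))
    (p : RectPattern (MarkedAlphabet A) 2) : Prop :=
  ∀ u, (p.data u).2.1 ∈ 𝒮 ∧ (p.data u).2.2 ∈ 𝒮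

/- positivity of sizes propagates backwards -/

lemma imageP_pos {A : Type} {s : Substitution A 2} {p q : RectPattern A 2}
    (h : ImageP s p q) (hq : ∀ l, 1 ≤ q.size l) : ∀ l, 1 ≤ p.size l := by
  intro l
  by_contra hl
  have hp0 : p.size l = 0 := by omega
  have h2 : ((q.size l : ℕ) : ℤ) = cum (gf s p l) ((p.size l : ℕ) : ℤ) := h.2.1 l
  rw [hp0] at h2
  simp only [Nat.cast_zero, cum_zero'] at h2
  have := hq l
  omega

lemma iterP_pos {A : Type} (S : ℕ → Substitution A 2) :
    ∀ (n : ℕ) (p q : RectPattern A 2), IterP S n p q → (∀ l, 1 ≤ q.size l) →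
      ∀ l, 1 ≤ p.size l := by
  intro n
  induction n with
  | zero => intro p q h hq; exact imageP_pos h hq
  | succ n ih =>
    intro p q h hq
    obtain ⟨r, h1, h2⟩ := h
    exact imageP_pos h1 (ih r q h2 hq)

end Aux

section Aux2

lemma step_lift {A : Type} (𝒮 : Finset (Substitution A 2)) {s : Substitution A 2}
    (hs : s ∈ 𝒮) {p0 q0 : RectPattern A 2} (hpos : ∀ l, 1 ≤ p0.size l)
    (h : ImageP s p0 q0)
    {p : RectPattern (MarkedAlphabet A) 2} (hrel : Rel2 p p0) (hinv : Inv2 𝒮 p) :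
    ∃ q, ImageP (marked s) p q ∧ Rel2 q q0 ∧ Inv2 𝒮 q := by
  classical
  obtain ⟨hcomp, hsz, hdata⟩ := h
  have haxis : ∀ (l : Fin 2) (r : ℤ), 0 ≤ r → r < ((p0.size l : ℕ) : ℤ) →
      p0.mem (axisPt l r) := by
    intro l r h0 h1 l'
    unfold axisPt
    by_cases hl : l' = l
    · rw [if_pos hl, hl]
      exact ⟨h0, h1⟩
    · rw [if_neg hl]
      exact ⟨le_refl 0, by have := hpos l'; omega⟩
  have hw : ∀ i, p0.mem i → ∀ l, (s (p0.data i)).size l = gf s p0 l (i l) := by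
    intro i hi l
    have hax : p0.mem (axisPt l (i l)) := haxis l (i l) (hi l).1 (hi l).2
    have hax_eq : i l = axisPt l (i l) l := by unfold axisPt; rw [if_pos rfl]
    exact hcomp i (axisPt l (i l)) hi hax l hax_eq
  have hphi' : ∀ i, p0.mem i → ∀ l,
      nphi (fun _ => marked s) p.data i l = phif s p0 i l := by
    intro i hi l
    show cum (fun r => (s ((p.data (axisPt l r)).1)).size l) (i l) = cum (gf s p0 l) (i l)
    refine cum_congr' (hi l).1 ?_
    intro r h0 h1
    show (s ((p.data (axisPt l r)).1)).size l = (s (p0.data (axisPt l r))).size l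
    rw [hrel.2 _ (haxis l r h0 (lt_trans h1 (hi l).2))]
  have hphitop : ∀ l, nphi (fun _ => marked s) p.data (fun l' => ((p.size l' : ℕ) : ℤ)) l
      = cum (gf s p0 l) ((p0.size l : ℕ) : ℤ) := by
    intro l
    have hsz' : ((p.size l : ℕ) : ℤ) = ((p0.size l : ℕ) : ℤ) := by rw [hrel.1]
    show cum (fun r => (s ((p.data (axisPt l r)).1)).size l) ((p.size l : ℕ) : ℤ) = _
    rw [hsz']
    refine cum_congr' (Int.natCast_nonneg _) ?_
    intro r h0 h1
    show (s ((p.data (axisPt l r)).1)).size l = (s (p0.data (axisPt l r))).size l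
    rw [hrel.2 _ (haxis l r h0 h1)]
  refine ⟨⟨q0.size, fun u =>
      if hex : ∃ i', Dec2 s p0 u i' then
        (q0.data u,
          (if u 0 = phif s p0 (Classical.choose hex) 0
              + ((gf s p0 0 ((Classical.choose hex) 0)) : ℤ) - 1
            then (p.data (Classical.choose hex)).2.1 else s),
          (if u 1 = phif s p0 (Classical.choose hex) 1
              + ((gf s p0 1 ((Classical.choose hex) 1)) : ℤ) - 1
            then (p.data (Classical.choose hex)).2.2 else s))
      else (q0.data u, s, s)⟩, ⟨?_, ?_, ?_⟩, ⟨rfl, ?_⟩, ?_⟩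
  · -- NCompatP
    intro i j hi hj l hl
    have hi0 : p0.mem i := (mem_of_size_eq' hrel.1 i).1 hi
    have hj0 : p0.mem j := (mem_of_size_eq' hrel.1 j).1 hj
    show (s ((p.data i).1)).size l = (s ((p.data j).1)).size l
    rw [hrel.2 i hi0, hrel.2 j hj0]
    exact hcomp i j hi0 hj0 l hl
  · -- sizes
    intro l
    rw [hphitop l]
    exact hsz l
  · -- data
    intro i hi jj hjb
    have hi0 : p0.mem i := (mem_of_size_eq' hrel.1 i).1 hi
    have hwi : ∀ l, (s (p0.data i)).size l = gf s p0 l (i l) := hw i hi0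
    have hb : ∀ l, 0 ≤ jj l ∧ jj l < (gf s p0 l (i l) : ℤ) := by
      intro l
      have h' := hjb l
      have heq : ((marked s) (p.data i)).size l = gf s p0 l (i l) := by
        show (s ((p.data i).1)).size l = _
        rw [hrel.2 i hi0]; exact hwi l
      rw [heq] at h'
      exact h'
    have hul : ∀ l, (nphi (fun _ => marked s) p.data i + jj) l = phif s p0 i l + jj l := by
      intro l
      show nphi (fun _ => marked s) p.data i l + jj l = _
      rw [hphi' i hi0 l]
    have hDu : Dec2 s p0 (nphi (fun _ => marked s) p.data i + jj) i := by
      refine ⟨hi0, fun l => ?_⟩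
      rw [hul l]
      obtain ⟨hb1, hb2⟩ := hb l
      constructor <;> omega
    have hex : ∃ i', Dec2 s p0 (nphi (fun _ => marked s) p.data i + jj) i' := ⟨i, hDu⟩
    dsimp only
    rw [dif_pos hex]
    have hch : Classical.choose hex = i := dec2_unique (Classical.choose_spec hex) hDu
    rw [hch]
    refine Prod.ext ?_ (Prod.ext ?_ ?_)
    · show q0.data (nphi (fun _ => marked s) p.data i + jj) = (s ((p.data i).1)).data jj
      rw [hrel.2 i hi0]
      have harg : nphi (fun _ => marked s) p.data i + jj
          = nphi (fun _ => s) p0.data i + jj := by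
        funext l
        rw [hul l]
        rfl
      rw [harg]
      exact hdata i hi0 jj (fun l => by rw [hwi l]; exact hb l)
    · show (if (nphi (fun _ => marked s) p.data i + jj) 0
            = phif s p0 i 0 + ((gf s p0 0 (i 0)) : ℤ) - 1
          then (p.data i).2.1 else s)
        = (if jj 0 = (((s ((p.data i).1)).size 0 : ℕ) : ℤ) - 1 then (p.data i).2.1 else s)
      have hc : ((nphi (fun _ => marked s) p.data i + jj) 0
            = phif s p0 i 0 + ((gf s p0 0 (i 0)) : ℤ) - 1)
          ↔ (jj 0 = (((s ((p.data i).1)).size 0 : ℕ) : ℤ) - 1) := by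
        rw [hul 0]
        have heq : ((s ((p.data i).1)).size 0) = gf s p0 0 (i 0) := by
          rw [hrel.2 i hi0]; exact hwi 0
        rw [heq]
        omega
      exact if_congr hc rfl rfl
    · show (if (nphi (fun _ => marked s) p.data i + jj) 1
            = phif s p0 i 1 + ((gf s p0 1 (i 1)) : ℤ) - 1
          then (p.data i).2.2 else s)
        = (if jj 1 = (((s ((p.data i).1)).size 1 : ℕ) : ℤ) - 1 then (p.data i).2.2 else s)
      have hc : ((nphi (fun _ => marked s) p.data i + jj) 1
            = phif s p0 i 1 + ((gf s p0 1 (i 1)) : ℤ) - 1)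
          ↔ (jj 1 = (((s ((p.data i).1)).size 1 : ℕ) : ℤ) - 1) := by
        rw [hul 1]
        have heq : ((s ((p.data i).1)).size 1) = gf s p0 1 (i 1) := by
          rw [hrel.2 i hi0]; exact hwi 1
        rw [heq]
        omega
      exact if_congr hc rfl rfl
  · -- Rel2 data component
    intro u _
    dsimp only
    split <;> rfl
  · -- Inv2
    intro u
    dsimp only
    split
    · refine ⟨?_, ?_⟩
      · dsimp only
        split
        · exact (hinv _).1
        · exact hs
      · dsimp only
        split
        · exact (hinv _).2
        · exact hs
    · exact ⟨hs, hs⟩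

end Aux2

section Aux3

lemma iter_lift {A : Type} (𝒮 : Finset (Substitution A 2)) (S : ℕ → Substitution A 2)
    (hS : ∀ i, S i ∈ 𝒮) :
    ∀ (n : ℕ) (p0 q0 : RectPattern A 2), IterP S n p0 q0 → (∀ l, 1 ≤ q0.size l) →
    ∀ p : RectPattern (MarkedAlphabet A) 2, Rel2 p p0 → Inv2 𝒮 p →
    ∃ q, IterP (fun i => marked (S i)) n p q ∧ Rel2 q q0 ∧ Inv2 𝒮 q := by
  intro n
  induction n with
  | zero =>
    intro p0 q0 h hq p hrel hinv
    obtain ⟨q, h1, h2, h3⟩ := step_lift 𝒮 (hS 0) (imageP_pos h hq) h hrel hinv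
    exact ⟨q, h1, h2, h3⟩
  | succ n ih =>
    intro p0 q0 h hq p hrel hinv
    obtain ⟨r, h1, h2⟩ := h
    have hr : ∀ l, 1 ≤ r.size l := iterP_pos S n r q0 h2 hq
    obtain ⟨p', hp1, hp2, hp3⟩ := step_lift 𝒮 (hS (n+1)) (imageP_pos h1 hr) h1 hrel hinv
    obtain ⟨q, hq1, hq2, hq3⟩ := ih r q0 h2 hq p' hp2 hp3
    exact ⟨q, ⟨p', hp1, hq1⟩, hq2, hq3⟩

/- projection of patterns -/

def projP {A : Type} (q : RectPattern (MarkedAlphabet A) 2) : RectPattern A 2 :=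
  ⟨q.size, fun u => (q.data u).1⟩

lemma imageP_proj {A : Type} (s : Substitution A 2)
    {p q : RectPattern (MarkedAlphabet A) 2}
    (h : ImageP (marked s) p q) : ImageP s (projP p) (projP q) := by
  obtain ⟨h1, h2, h3⟩ := h
  refine ⟨?_, ?_, ?_⟩
  · intro i j hi hj l hl
    exact h1 i j hi hj l hl
  · intro l
    exact h2 l
  · intro i hi jj hb
    exact congrArg Prod.fst (h3 i hi jj hb)

lemma iterP_proj {A : Type} (S : ℕ → Substitution A 2) :
    ∀ (n : ℕ) (p q : RectPattern (MarkedAlphabet A) 2),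
      IterP (fun i => marked (S i)) n p q → IterP S n (projP p) (projP q) := by
  intro n
  induction n with
  | zero => intro p q h; exact imageP_proj (S 0) h
  | succ n ih =>
    intro p q h
    obtain ⟨r, h1, h2⟩ := h
    exact ⟨projP r, imageP_proj (S (n+1)) h1, ih r q h2⟩

/- windows -/

noncomputable def win (m : ℕ) : Finset (Fin 2 → ℤ) := Finset.Icc (fun _ => -(m:ℤ)) (fun _ => (m:ℤ))

lemma mem_win {m : ℕ} {u : Fin 2 → ℤ} : u ∈ win m ↔ ∀ l, -(m:ℤ) ≤ u l ∧ u l ≤ m := by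
  rw [win, Finset.mem_Icc]
  constructor
  · rintro ⟨h1, h2⟩ l
    exact ⟨h1 l, h2 l⟩
  · intro h
    exact ⟨fun l => (h l).1, fun l => (h l).2⟩

lemma zero_mem_win (m : ℕ) : (0 : Fin 2 → ℤ) ∈ win m := by
  rw [mem_win]
  intro l
  show -(m:ℤ) ≤ 0 ∧ (0:ℤ) ≤ m
  omega

lemma win_mono {M m : ℕ} (h : M ≤ m) : win M ⊆ win m := by
  intro u hu
  rw [mem_win] at hu ⊢
  intro l
  obtain ⟨h1, h2⟩ := hu l
  constructor <;> omega

lemma exists_win_bound (U : Finset (Fin 2 → ℤ)) : ∃ M : ℕ, ∀ u ∈ U, u ∈ win M := by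
  classical
  refine ⟨U.sup (fun u => (u 0).natAbs ⊔ (u 1).natAbs), ?_⟩
  intro u hu
  rw [mem_win]
  have hsup : (u 0).natAbs ⊔ (u 1).natAbs ≤ U.sup (fun u => (u 0).natAbs ⊔ (u 1).natAbs) :=
    Finset.le_sup (f := fun u => (u 0).natAbs ⊔ (u 1).natAbs) hu
  have h0 : (u 0).natAbs ≤ U.sup (fun u => (u 0).natAbs ⊔ (u 1).natAbs) :=
    le_trans (le_max_left _ _) hsup
  have h1 : (u 1).natAbs ≤ U.sup (fun u => (u 0).natAbs ⊔ (u 1).natAbs) :=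
    le_trans (le_max_right _ _) hsup
  intro l
  have hl : (u l).natAbs ≤ U.sup (fun u => (u 0).natAbs ⊔ (u 1).natAbs) := by
    fin_cases l
    · exact h0
    · exact h1
  clear hsup h0 h1 hu
  generalize hMM : U.sup (fun u => (u 0).natAbs ⊔ (u 1).natAbs) = M at hl ⊢
  clear hMM
  omega

/- ultrafilter pigeonhole -/

lemma ultra_const {β : Type _} (F : Ultrafilter ℕ) (T : Finset β) (f : ℕ → β)
    (hf : ∀ m, f m ∈ T) : ∃ b, {m | f m = b} ∈ F := by
  classical
  by_contra hc
  push_neg at hc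
  have h1 : ∀ b : β, {m | f m = b}ᶜ ∈ F := fun b =>
    (Ultrafilter.compl_mem_iff_notMem).2 (hc b)
  have h2 : (⋂ b ∈ T, {m | f m = b}ᶜ) ∈ F :=
    (Filter.biInter_finset_mem T).2 fun b _ => h1 b
  obtain ⟨m, hm⟩ := Filter.nonempty_of_mem h2
  simp only [Set.mem_iInter, Set.mem_compl_iff, Set.mem_setOf_eq] at hm
  exact hm (f m) (hf m) rfl

end Aux3


/-- the local S-adic subshift `T_S` is the image, under the
letter-to-letter map keeping the `A`-component, of the local S̃-adic subshift
of the associated marked sequence `S̃`. -/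
theorem marked_sadic_projects_onto_sadic
    {A : Type} [Fintype A]
    (𝒮 : Finset (Substitution A 2)) (S : ℕ → Substitution A 2)
    (hS : ∀ i, S i ∈ 𝒮) :
    LocalSAdic S = piLetter '' LocalSAdic (fun i => marked (S i)) := by
  classical
  apply Set.eq_of_subset_of_subset
  · -- ⊆
    intro x hx
    -- for each window, a finite marked lift
    have key : ∀ m : ℕ, ∃ y : Config (MarkedAlphabet A) 2,
        (∀ u, (y u).1 = x u ∧ (y u).2.1 ∈ 𝒮 ∧ (y u).2.2 ∈ 𝒮) ∧
        ∃ (n : ℕ) (b : MarkedAlphabet A) (q : RectPattern (MarkedAlphabet A) 2),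
          IterP (fun i => marked (S i)) n (letterPat b) q ∧ OccursIn (win m) y q := by
      intro m
      obtain ⟨n, a, q0, hIter, hOcc⟩ := hx (win m)
      obtain ⟨v, hocc⟩ := hOcc
      have hqpos : ∀ l, 1 ≤ q0.size l := by
        intro l
        obtain ⟨hb1, hb2⟩ := (hocc 0 (zero_mem_win m)).1 l
        omega
      obtain ⟨q, hIterQ, hrelQ, hinvQ⟩ :=
        iter_lift 𝒮 S hS n (letterPat a) q0 hIter hqpos (letterPat (a, S 0, S 0))
          ⟨rfl, fun u _ => rfl⟩ (fun u => ⟨hS 0, hS 0⟩)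
      refine ⟨fun u => if u ∈ win m then q.data (u + v) else (x u, S 0, S 0), ?_,
        n, (a, S 0, S 0), q, hIterQ, v, ?_⟩
      · intro u
        dsimp only
        by_cases hu : u ∈ win m
        · rw [if_pos hu]
          refine ⟨?_, (hinvQ _).1, (hinvQ _).2⟩
          rw [hrelQ.2 _ (hocc u hu).1, (hocc u hu).2]
        · rw [if_neg hu]
          exact ⟨rfl, hS 0, hS 0⟩
      · intro u hu
        refine ⟨(mem_of_size_eq' hrelQ.1 (u + v)).2 (hocc u hu).1, ?_⟩
        show q.data (u + v) = if u ∈ win m then q.data (u + v) else (x u, S 0, S 0)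
        rw [if_pos hu]
    choose Y hY using key
    -- pass to a limit along an ultrafilter
    let F : Ultrafilter ℕ := Ultrafilter.of Filter.cofinite
    have hFcof : (F : Filter ℕ) ≤ Filter.cofinite := Ultrafilter.of_le _
    have hval : ∀ u : Fin 2 → ℤ, ∃ b : MarkedAlphabet A, {m | Y m u = b} ∈ F := by
      intro u
      refine ultra_const F (({x u} : Finset A) ×ˢ (𝒮 ×ˢ 𝒮)) (fun m => Y m u) ?_
      intro m
      obtain ⟨h1, h2, h3⟩ := (hY m).1 u
      rw [Finset.mem_product, Finset.mem_product]
      exact ⟨by rw [Finset.mem_singleton]; exact h1, h2, h3⟩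
    choose x' hx' using hval
    refine ⟨x', ?_, ?_⟩
    · -- x' belongs to the marked local S-adic subshift
      intro U
      obtain ⟨M, hM⟩ := exists_win_bound U
      have hGE : {m : ℕ | M ≤ m} ∈ F := by
        apply hFcof
        rw [Filter.mem_cofinite]
        have hsub : {m : ℕ | M ≤ m}ᶜ ⊆ Set.Iio M := by
          intro m hm
          simp only [Set.mem_compl_iff, Set.mem_setOf_eq, not_le] at hm
          exact hm
        exact (Set.finite_Iio M).subset hsub
      have hAgree : (⋂ u ∈ U, {m | Y m u = x' u}) ∈ F :=
        (Filter.biInter_finset_mem U).2 fun u _ => hx' u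
      obtain ⟨m, hmGE, hmAg⟩ := Filter.nonempty_of_mem (Filter.inter_mem hGE hAgree)
      obtain ⟨n, b, q, hIter, v, hocc⟩ := (hY m).2
      refine ⟨n, b, q, hIter, v, ?_⟩
      intro u hu
      have huW : u ∈ win m := win_mono hmGE (hM u hu)
      refine ⟨(hocc u huW).1, ?_⟩
      rw [(hocc u huW).2]
      exact Set.mem_iInter₂.1 hmAg u hu
    · -- the projection is x
      funext u
      obtain ⟨m, hm⟩ := Filter.nonempty_of_mem (hx' u)
      show (x' u).1 = x u
      have hm' : Y m u = x' u := hm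
      rw [← hm']
      exact ((hY m).1 u).1
  · -- ⊇
    rintro x ⟨x', hx', rfl⟩
    intro U
    obtain ⟨n, b, q, hIter, hOcc⟩ := hx' U
    refine ⟨n, b.1, projP q, iterP_proj S n _ q hIter, ?_⟩
    obtain ⟨v, hv⟩ := hOcc
    exact ⟨v, fun u hu => ⟨(hv u hu).1, congrArg Prod.fst (hv u hu).2⟩⟩
end
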